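/- Let X be a finite set, Θ ⊆ ℝ^m open, and θ ↦ p_θ a continuously differentiable family of strictly positive probability distributions on X. Fix α > 0. Then for all i, j and all θ ∈ Θ, Cov_{p_θ^{(α)}}[∂_i log p_θ(X), ∂_j log p_θ(X)] = (1/α²) · Cov_{p_θ^{(α)}}[∂_i log p_θ^{(α)}(X), ∂_j log p_θ^{(α)}(X)]; that is, the α-information matrix of the family equals 1/α² times the Fisher information matrix of the escort family S^{(α)} = {p_θ^{(α)}}. -/

import Mathlib

open scoped BigOperators Topology Matrix
open Real MeasureTheory

noncomputable section

/-- Expectation of `A` under the weight/distribution `p` on a finite set. -/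
def expct {X : Type*} [Fintype X] (p A : X → ℝ) : ℝ := ∑ x, p x * A x

/-- Covariance of `A` and `B` under `p`. -/
def covf {X : Type*} [Fintype X] (p A B : X → ℝ) : ℝ :=
  (∑ x, p x * A x * B x) - (∑ x, p x * A x) * (∑ x, p x * B x)

/-- Variance of `A` under `p`: `E_p[(A - E_p A)^2]`. -/
def varE {X : Type*} [Fintype X] (p A : X → ℝ) : ℝ :=
  ∑ x, p x * (A x - expct p A) ^ 2

/-- The α-escort distribution of `p`. -/
def escort {X : Type*} [Fintype X] (α : ℝ) (p : X → ℝ) : X → ℝ :=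
  fun x => p x ^ α / ∑ y, p y ^ α

/-- Partial derivative in the `i`-th coordinate direction. -/
def pderiv {m : ℕ} (i : Fin m) (f : (Fin m → ℝ) → ℝ) (θ : Fin m → ℝ) : ℝ :=
  fderiv ℝ f θ (Pi.single i 1)

/-- Covariance matrix of a vector-valued map `A` under `p`. -/
def covMatrix {X : Type*} [Fintype X] {m : ℕ} (p : X → ℝ) (A : X → Fin m → ℝ) :
    Matrix (Fin m) (Fin m) ℝ :=
  Matrix.of fun i j => covf p (fun x => A x i) (fun x => A x j)

/-- The α-information matrix `G^{(α)}(θ)`. -/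
def Galpha {X : Type*} [Fintype X] {m : ℕ} (α : ℝ) (p : (Fin m → ℝ) → X → ℝ)
    (θ : Fin m → ℝ) : Matrix (Fin m) (Fin m) ℝ :=
  Matrix.of fun i j =>
    covf (escort α (p θ)) (fun x => pderiv i (fun t => Real.log (p t x)) θ)
      (fun x => pderiv j (fun t => Real.log (p t x)) θ)

/-- The I_α-divergence (relative α-entropy). -/
def Ialpha {X : Type*} [Fintype X] (α : ℝ) (p q : X → ℝ) : ℝ :=
  (1 / (1 - α)) * Real.log (∑ x, p x * q x ^ (α - 1))
    + (1 / α) * Real.log (∑ x, q x ^ α)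
    - (1 / (α * (1 - α))) * Real.log (∑ x, p x ^ α)

/-- Generalized KL-divergence between positive measures on a finite set. -/
def genKL {X : Type*} [Fintype X] (pt qt : X → ℝ) : ℝ :=
  ∑ x, pt x * Real.log (pt x / qt x) - ∑ x, pt x + ∑ x, qt x

/-- The Fisher information matrix `G^{(e)}(θ)`. -/
def GeMat {X : Type*} [Fintype X] {k : ℕ} (p : (Fin k → ℝ) → X → ℝ) (θ : Fin k → ℝ) :
    Matrix (Fin k) (Fin k) ℝ :=
  Matrix.of fun i j =>
    ∑ x, p θ x * pderiv i (fun t => Real.log (p t x)) θ * pderiv j (fun t => Real.log (p t x)) θ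

/-- The prior matrix `J^λ(θ)` with entries `∂_i log λ · ∂_j log λ`. -/
def Jmat {k : ℕ} (lam : (Fin k → ℝ) → ℝ) (θ : Fin k → ℝ) : Matrix (Fin k) (Fin k) ℝ :=
  Matrix.of fun i j =>
    pderiv i (fun t => Real.log (lam t)) θ * pderiv j (fun t => Real.log (lam t)) θ

/-- The generalized Fisher matrix `G^{(f,F)}(θ)` of the escort model. -/
def GFF {X : Type*} [Fintype X] {k : ℕ} (F : ℝ → ℝ) (p : (Fin k → ℝ) → X → ℝ)
    (θ : Fin k → ℝ) : Matrix (Fin k) (Fin k) ℝ :=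
  Matrix.of fun i j =>
    ∑ x, F (p θ x) * pderiv i (fun t => Real.log (F (p t x))) θ
      * pderiv j (fun t => Real.log (F (p t x))) θ

/-- The generalized f-divergence `D_f^{(F)}(p,q)`. -/
def genDiv {X : Type*} [Fintype X] (f F : ℝ → ℝ) (p q : X → ℝ) : ℝ :=
  (1 / deriv (deriv f) 1) * ∑ x, F (q x) * f (F (p x) / F (q x))

/-- The Bayesian I_α-divergence between `λ·p` and `μ·q`. -/
def IalphaB {X : Type*} [Fintype X] (α lam mu : ℝ) (p q : X → ℝ) : ℝ :=
  lam * Ialpha α p q + lam * Real.log (lam / mu) - lam + mu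

/-- The open-simplex parametrization of distributions on a set with `d+1` points. -/
def simplexFam (d : ℕ) (θ : Fin d → ℝ) : Fin (d + 1) → ℝ :=
  fun x => if h : (x : ℕ) < d then θ ⟨x, h⟩ else 1 - ∑ i, θ i

lemma covf_affine {X : Type*} [Fintype X] (q A B : X → ℝ) (α c c' : ℝ)
    (hq : ∑ x, q x = 1) :
    covf q (fun x => α * A x - c) (fun x => α * B x - c') = α ^ 2 * covf q A B := by
  simp only [covf]
  have e1 : ∑ x, q x * (α * A x - c) * (α * B x - c')
      = α ^ 2 * ∑ x, q x * A x * B x - (α * c') * ∑ x, q x * A x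
        - (α * c) * ∑ x, q x * B x + c * c' * ∑ x, q x := by
    rw [Finset.mul_sum, Finset.mul_sum, Finset.mul_sum, Finset.mul_sum,
      ← Finset.sum_sub_distrib, ← Finset.sum_sub_distrib, ← Finset.sum_add_distrib]
    exact Finset.sum_congr rfl fun x _ => by ring
  have e2 : ∑ x, q x * (α * A x - c) = α * ∑ x, q x * A x - c * ∑ x, q x := by
    rw [Finset.mul_sum, Finset.mul_sum, ← Finset.sum_sub_distrib]
    exact Finset.sum_congr rfl fun x _ => by ring
  have e3 : ∑ x, q x * (α * B x - c') = α * ∑ x, q x * B x - c' * ∑ x, q x := by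
    rw [Finset.mul_sum, Finset.mul_sum, ← Finset.sum_sub_distrib]
    exact Finset.sum_congr rfl fun x _ => by ring
  rw [e1, e2, e3, hq]
  ring

/-- the α-information matrix is 1/α² times the Fisher information of
the escort family. -/
theorem alpha_metric_eq_escort_fisher {X : Type*} [Fintype X] {m : ℕ}
    (Θ : Set (Fin m → ℝ)) (hΘ : IsOpen Θ)
    (p : (Fin m → ℝ) → X → ℝ)
    (hsmooth : ∀ x, ContDiffOn ℝ 1 (fun θ => p θ x) Θ)
    (hpos : ∀ θ ∈ Θ, ∀ x, 0 < p θ x)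
    (hsum : ∀ θ ∈ Θ, ∑ x, p θ x = 1)
    (α : ℝ) (hα : 0 < α) :
    ∀ θ ∈ Θ, ∀ i j : Fin m,
      covf (escort α (p θ)) (fun x => pderiv i (fun t => Real.log (p t x)) θ)
          (fun x => pderiv j (fun t => Real.log (p t x)) θ)
        = (1 / α ^ 2) *
          covf (escort α (p θ))
            (fun x => pderiv i (fun t => Real.log (escort α (p t) x)) θ)
            (fun x => pderiv j (fun t => Real.log (escort α (p t) x)) θ) := by
  intro θ hθ i j
  set S : (Fin m → ℝ) → ℝ := fun t => ∑ y, p t y ^ α with hSdef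
  have hθnb : Θ ∈ 𝓝 θ := hΘ.mem_nhds hθ
  have hpd : ∀ y : X, DifferentiableAt ℝ (fun t => p t y) θ := fun y =>
    ((hsmooth y).differentiableOn one_ne_zero).differentiableAt hθnb
  have hne : (Finset.univ : Finset X).Nonempty := by
    by_contra h
    rw [Finset.not_nonempty_iff_eq_empty] at h
    have := hsum θ hθ
    simp [h] at this
  have hSpos : ∀ t ∈ Θ, 0 < S t := fun t ht =>
    Finset.sum_pos (fun y _ => Real.rpow_pos_of_pos (hpos t ht y) α) hne
  have hS : DifferentiableAt ℝ S θ :=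
    DifferentiableAt.fun_sum fun y _ =>
      (hpd y).rpow_const (Or.inl (ne_of_gt (hpos θ hθ y)))
  have hlogS : DifferentiableAt ℝ (fun t => Real.log (S t)) θ :=
    hS.log (ne_of_gt (hSpos θ hθ))
  -- key formula for the partial derivative of log escort
  have key : ∀ (k : Fin m) (x : X),
      pderiv k (fun t => Real.log (escort α (p t) x)) θ
        = α * pderiv k (fun t => Real.log (p t x)) θ
          - pderiv k (fun t => Real.log (S t)) θ := by
    intro k x
    have hlogp : DifferentiableAt ℝ (fun t => Real.log (p t x)) θ :=
      (hpd x).log (ne_of_gt (hpos θ hθ x))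
    have hev : (fun t => Real.log (escort α (p t) x))
        =ᶠ[𝓝 θ] fun t => α * Real.log (p t x) - Real.log (S t) := by
      filter_upwards [hθnb] with t ht
      have hpt : 0 < p t x := hpos t ht x
      have hst : S t ≠ 0 := ne_of_gt (hSpos t ht)
      simp only [escort]
      rw [Real.log_div (ne_of_gt (Real.rpow_pos_of_pos hpt α)) hst,
        Real.log_rpow hpt]
    have hfd : fderiv ℝ (fun t => Real.log (escort α (p t) x)) θ
        = fderiv ℝ (fun t => α * Real.log (p t x) - Real.log (S t)) θ :=
      hev.fderiv_eq
    simp only [pderiv, hfd]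
    rw [fderiv_fun_sub (hlogp.const_mul α) hlogS, fderiv_const_mul hlogp α]
    simp
  have hq1 : ∑ x, escort α (p θ) x = 1 := by
    simp only [escort]
    rw [← Finset.sum_div]
    exact div_self (ne_of_gt (hSpos θ hθ))
  have hcov := covf_affine (escort α (p θ))
    (fun x => pderiv i (fun t => Real.log (p t x)) θ)
    (fun x => pderiv j (fun t => Real.log (p t x)) θ) α
    (pderiv i (fun t => Real.log (S t)) θ)
    (pderiv j (fun t => Real.log (S t)) θ) hq1
  have hfi : (fun x => pderiv i (fun t => Real.log (escort α (p t) x)) θ)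
      = fun x => α * pderiv i (fun t => Real.log (p t x)) θ
          - pderiv i (fun t => Real.log (S t)) θ := funext (key i)
  have hfj : (fun x => pderiv j (fun t => Real.log (escort α (p t) x)) θ)
      = fun x => α * pderiv j (fun t => Real.log (p t x)) θ
          - pderiv j (fun t => Real.log (S t)) θ := funext (key j)
  rw [hfi, hfj, hcov]
  field_simp
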